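/- Let θ < 0 and let the AR(1) process Y_0 = 0, Y_n = θY_{n-1} + X_n have i.i.d. innovations whose law has no atoms on [0,∞). Then the persistence probabilities p_n(θ) = P(Y_1 ≥ 0, …, Y_n ≥ 0) satisfy ∑_{k=0}^n (-1)^k p_k(θ) p_{n-k}(1/θ) = 0 for all n ≥ 1. -/

import Mathlib

open Polynomial MeasureTheory

/-- Persistence probability `p_n(θ) = P(Y_1 ≥ 0, …, Y_n ≥ 0)` of the AR(1) process
`Y_0 = 0`, `Y_n = θ Y_{n-1} + X_n` with i.i.d. innovations of law `μ`, expressed via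
the product law of the first `n` innovations: `Y_{k+1} = ∑_{j ≤ k} θ^{k-j} X_{j+1}`. -/
noncomputable def persist (μ : Measure ℝ) (θ : ℝ) (n : ℕ) : ℝ :=
  ((Measure.pi fun _ : Fin n => μ)
    {u | ∀ k : Fin n, 0 ≤ ∑ j ∈ Finset.Iic k, θ ^ (k.1 - j.1) * u j}).toReal

/-- The uniform probability law on the interval `[a,b]`. -/
noncomputable def unif (a b : ℝ) : Measure ℝ :=
  ENNReal.ofReal (b - a)⁻¹ • volume.restrict (Set.Icc a b)

namespace PersistDual


/-- Partial sum of the AR(1) recursion: `pS θ x i = ∑_{j<i} θ^(i-1-j) x j`. -/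
noncomputable def pS (θ : ℝ) (x : ℕ → ℝ) (i : ℕ) : ℝ :=
  ∑ j ∈ Finset.range i, θ ^ (i - 1 - j) * x j

/-- Weighted partial sums `W θ x i = ∑_{j<i} (θ⁻¹)^(j+1) x j`. -/
noncomputable def W (θ : ℝ) (x : ℕ → ℝ) (i : ℕ) : ℝ :=
  ∑ j ∈ Finset.range i, (θ⁻¹) ^ (j + 1) * x j

/-- Alternating-sign coordinates. -/
noncomputable def uu (θ : ℝ) (x : ℕ → ℝ) (i : ℕ) : ℝ := (-1 : ℝ) ^ i * W θ x i

lemma pS_congr {θ : ℝ} {x y : ℕ → ℝ} {i : ℕ} (h : ∀ j < i, x j = y j) :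
    pS θ x i = pS θ y i := by
  unfold pS
  exact Finset.sum_congr rfl fun j hj => by rw [h j (Finset.mem_range.1 hj)]

lemma pS_succ (θ : ℝ) (x : ℕ → ℝ) (i : ℕ) :
    pS θ x (i + 1) = x i + θ * pS θ x i := by
  unfold pS
  rw [Finset.sum_range_succ, Finset.mul_sum]
  have h1 : (i + 1 - 1 - i) = 0 := by omega
  rw [h1, pow_zero, one_mul, add_comm]
  congr 1
  refine Finset.sum_congr rfl fun j hj => ?_
  have hj' := Finset.mem_range.1 hj
  have h2 : i + 1 - 1 - j = (i - 1 - j) + 1 := by omega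
  rw [h2, pow_succ]
  ring

lemma pS_eq_mul_u {θ : ℝ} (hθ : θ < 0) (x : ℕ → ℝ) (i : ℕ) :
    pS θ x i = (-θ) ^ i * uu θ x i := by
  have hθ0 : θ ≠ 0 := ne_of_lt hθ
  have h1 : pS θ x i = θ ^ i * W θ x i := by
    unfold pS W
    rw [Finset.mul_sum]
    refine Finset.sum_congr rfl fun j hj => ?_
    have hj' := Finset.mem_range.1 hj
    have h2 : θ ^ i = θ ^ (i - 1 - j) * θ ^ (j + 1) := by
      rw [← pow_add]; congr 1; omega
    rw [← mul_assoc, h2, inv_pow, mul_assoc (θ ^ (i - 1 - j)),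
      mul_inv_cancel₀ (pow_ne_zero _ hθ0), mul_one]
  rw [h1]
  unfold uu
  rw [← mul_assoc, ← mul_pow]
  norm_num

lemma pS_nonneg_iff {θ : ℝ} (hθ : θ < 0) (x : ℕ → ℝ) (i : ℕ) :
    0 ≤ pS θ x i ↔ 0 ≤ uu θ x i := by
  rw [pS_eq_mul_u hθ]
  exact mul_nonneg_iff_of_pos_left (pow_pos (neg_pos.2 hθ) i)

lemma pS_eq_zero_iff {θ : ℝ} (hθ : θ < 0) (x : ℕ → ℝ) (i : ℕ) :
    pS θ x i = 0 ↔ uu θ x i = 0 := by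
  rw [pS_eq_mul_u hθ, mul_eq_zero]
  have : (-θ) ^ i ≠ 0 := pow_ne_zero _ (by linarith)
  tauto

/-- The reversed-tail partial sums in terms of `W`. -/
lemma tail_eq {θ : ℝ} (hθ0 : θ ≠ 0) (x : ℕ → ℝ) {m n : ℕ} (hmn : m ≤ n) :
    pS θ⁻¹ (fun j => x (n - 1 - j)) m = θ ^ (n - m + 1) * (W θ x n - W θ x (n - m)) := by
  unfold pS W
  rw [← Finset.sum_Ico_eq_sub _ (by omega : n - m ≤ n), Finset.mul_sum]
  refine Finset.sum_nbij' (fun j => n - 1 - j) (fun l => n - 1 - l) ?_ ?_ ?_ ?_ ?_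
  · intro j hj
    have := Finset.mem_range.1 hj
    simp only [Finset.mem_Ico]
    omega
  · intro l hl
    have := Finset.mem_Ico.1 hl
    simp only [Finset.mem_range]
    omega
  · intro j hj; have := Finset.mem_range.1 hj
    show n - 1 - (n - 1 - j) = j; omega
  · intro l hl; have := Finset.mem_Ico.1 hl
    show n - 1 - (n - 1 - l) = l; omega
  · intro j hj
    have hj' := Finset.mem_range.1 hj
    have h2 : n - 1 - j + 1 = n - j := by omega
    rw [h2]
    have h3 : (θ⁻¹ : ℝ) ^ (n - j) = θ⁻¹ ^ (n - m + 1) * θ⁻¹ ^ (m - 1 - j) := by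
      rw [← pow_add]; congr 1; omega
    have hcan : θ ^ (n - m + 1) * θ⁻¹ ^ (n - m + 1) = 1 := by
      rw [inv_pow, mul_inv_cancel₀ (pow_ne_zero _ hθ0)]
    rw [h3, show θ ^ (n - m + 1) * (θ⁻¹ ^ (n - m + 1) * θ⁻¹ ^ (m - 1 - j) * x (n - 1 - j))
        = (θ ^ (n - m + 1) * θ⁻¹ ^ (n - m + 1)) * (θ⁻¹ ^ (m - 1 - j) * x (n - 1 - j)) from by
        ring, hcan, one_mul]

/-- Sign characterization of the reversed-tail persistence conditions. -/
lemma tail_nonneg_iff {θ : ℝ} (hθ : θ < 0) (x : ℕ → ℝ) {m n : ℕ} (hm1 : 1 ≤ m) (hmn : m ≤ n) :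
    0 ≤ pS θ⁻¹ (fun j => x (n - 1 - j)) m ↔
      (-1 : ℝ) ^ m * uu θ x n ≤ uu θ x (n - m) := by
  have hθ0 : θ ≠ 0 := ne_of_lt hθ
  obtain ⟨e, rfl⟩ : ∃ e, n = e + m := ⟨n - m, by omega⟩
  rw [tail_eq hθ0 x hmn]
  have he1 : e + m - m = e := by omega
  rw [he1]
  unfold uu
  rcases Nat.even_or_odd e with he | he <;> rcases Nat.even_or_odd m with hm | hm
  · -- e even, m even : θ^(e+1) < 0
    have h1 : θ ^ (e + 1) < 0 := Odd.pow_neg (by simp [Nat.even_add_one, Nat.not_odd_iff_even.2 he, parity_simps]) hθ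
    have h2 : (-1 : ℝ) ^ m = 1 := hm.neg_one_pow
    have h3 : (-1 : ℝ) ^ (e + m) = 1 := (he.add hm).neg_one_pow
    have h4 : (-1 : ℝ) ^ e = 1 := he.neg_one_pow
    rw [h2, h3, h4]
    constructor
    · intro h; nlinarith
    · intro h; nlinarith
  · -- e even, m odd
    have h1 : θ ^ (e + 1) < 0 := Odd.pow_neg (by simp [Nat.even_add_one, Nat.not_odd_iff_even.2 he, parity_simps]) hθ
    have h2 : (-1 : ℝ) ^ m = -1 := hm.neg_one_pow
    have h3 : (-1 : ℝ) ^ (e + m) = -1 := (Even.add_odd he hm).neg_one_pow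
    have h4 : (-1 : ℝ) ^ e = 1 := he.neg_one_pow
    rw [h2, h3, h4]
    constructor
    · intro h; nlinarith
    · intro h; nlinarith
  · -- e odd, m even
    have h1 : 0 < θ ^ (e + 1) := Even.pow_pos (by simpa [Nat.even_add_one, Nat.not_even_iff_odd] using he) hθ0
    have h2 : (-1 : ℝ) ^ m = 1 := hm.neg_one_pow
    have h3 : (-1 : ℝ) ^ (e + m) = -1 := (Odd.add_even he hm).neg_one_pow
    have h4 : (-1 : ℝ) ^ e = -1 := he.neg_one_pow
    rw [h2, h3, h4]
    constructor
    · intro h; nlinarith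
    · intro h; nlinarith
  · -- e odd, m odd
    have h1 : 0 < θ ^ (e + 1) := Even.pow_pos (by simpa [Nat.even_add_one, Nat.not_even_iff_odd] using he) hθ0
    have h2 : (-1 : ℝ) ^ m = -1 := hm.neg_one_pow
    have h3 : (-1 : ℝ) ^ (e + m) = 1 := (he.add_odd hm).neg_one_pow
    have h4 : (-1 : ℝ) ^ e = -1 := he.neg_one_pow
    rw [h2, h3, h4]
    constructor
    · intro h; nlinarith
    · intro h; nlinarith



/-- Extension of a finite tuple by zero. -/
noncomputable def ext (n : ℕ) (x : Fin n → ℝ) (j : ℕ) : ℝ :=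
  if h : j < n then x ⟨j, h⟩ else 0

lemma measurable_ext (n : ℕ) (j : ℕ) : Measurable fun x : Fin n → ℝ => ext n x j := by
  unfold ext
  split_ifs with h
  · exact measurable_pi_apply _
  · exact measurable_const

lemma measurable_pS_ext (n : ℕ) (θ : ℝ) (g : ℕ → ℕ) (i : ℕ) :
    Measurable fun x : Fin n → ℝ => pS θ (fun j => ext n x (g j)) i := by
  unfold pS
  apply Finset.measurable_sum
  intro j _
  exact (measurable_ext n (g j)).const_mul _

/-- Reindexing sum over `Finset.Iic k` in `Fin m` as a sum over `range (k+1)`. -/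
lemma sum_Iic_eq_range {m : ℕ} (k : Fin m) (f : ℕ → ℝ) :
    ∑ j ∈ Finset.Iic k, f j.1 = ∑ j ∈ Finset.range (k.1 + 1), f j := by
  refine Finset.sum_nbij' (fun (j : Fin m) => (j.1 : ℕ))
    (fun j => (⟨min j k.1, lt_of_le_of_lt (min_le_right _ _) k.isLt⟩ : Fin m)) ?_ ?_ ?_ ?_ ?_
  · intro a ha
    simp only [Finset.mem_Iic, Fin.le_def] at ha
    simp only [Finset.mem_range]; omega
  · intro a ha
    simp only [Finset.mem_range] at ha
    simp only [Finset.mem_Iic, Fin.le_def]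
    omega
  · intro a ha
    simp only [Finset.mem_Iic, Fin.le_def] at ha
    apply Fin.ext
    simp only [Fin.val_mk]
    omega
  · intro a ha
    simp only [Finset.mem_range] at ha
    simp only [Fin.val_mk]
    omega
  · intro a _; rfl



/-- Core combinatorial parity lemma. -/
lemma parity_core (n : ℕ) (hn : 1 ≤ n) (u : ℕ → ℝ) (hu0 : u 0 = 0)
    (H1 : ∀ I, 1 ≤ I → I ≤ n → (∀ i, 1 ≤ i → i < I → 0 ≤ u i) → u I ≠ 0)
    (g : ℕ → ℝ)
    (hg1 : ∀ k, ((∀ i, 1 ≤ i → i ≤ k → 0 ≤ u i) ∧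
           (∀ i, k ≤ i → i ≤ n - 1 → (-1 : ℝ) ^ (n - i) * u n ≤ u i)) → g k = 1)
    (hg0 : ∀ k, ¬((∀ i, 1 ≤ i → i ≤ k → 0 ≤ u i) ∧
           (∀ i, k ≤ i → i ≤ n - 1 → (-1 : ℝ) ^ (n - i) * u n ≤ u i)) → g k = 0) :
    ∑ k ∈ Finset.range (n + 1), (-1 : ℝ) ^ k * g k = 0 := by
  classical
  set A : ℕ → Prop := fun k => ∀ i, 1 ≤ i → i ≤ k → 0 ≤ u i with hA_def
  set B : ℕ → Prop := fun k => ∀ i, k ≤ i → i ≤ n - 1 → (-1 : ℝ) ^ (n - i) * u n ≤ u i with hB_def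
  set a := Nat.findGreatest A n with ha_def
  have hBn : B n := fun i hi hi' => absurd (lt_of_le_of_lt hi' (by omega)) (not_lt.2 hi)
  set b := Nat.find ⟨n, hBn⟩ with hb_def
  have hBb : B b := Nat.find_spec ⟨n, hBn⟩
  have hbn : b ≤ n := Nat.find_min' _ hBn
  have haA : A a := Nat.findGreatest_spec (Nat.zero_le n) (fun i hi hi' => absurd (le_trans hi hi') (by omega))
  have han : a ≤ n := Nat.findGreatest_le n
  have hAiff : ∀ k, k ≤ n → (A k ↔ k ≤ a) := by
    intro k hk
    constructor
    · intro h; exact Nat.le_findGreatest hk h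
    · intro h i hi hik; exact haA i hi (le_trans hik h)
  have hBiff : ∀ k, (B k ↔ b ≤ k) := by
    intro k
    constructor
    · intro h; exact Nat.find_min' _ h
    · intro h i hi hi'; exact hBb i (le_trans h hi) hi'
  -- rewrite the sum as a sum over an interval
  have hsum : ∑ k ∈ Finset.range (n + 1), (-1 : ℝ) ^ k * g k
      = ∑ k ∈ Finset.Ico b (a + 1), (-1 : ℝ) ^ k := by
    have e1 : ∀ k ∈ Finset.range (n+1), (-1 : ℝ) ^ k * g k
        = (if (A k ∧ B k) then ((-1:ℝ)^k) else 0) := by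
      intro k _
      split_ifs with h
      · rw [hg1 k h, mul_one]
      · rw [hg0 k h, mul_zero]
    rw [Finset.sum_congr rfl e1, ← Finset.sum_filter]
    apply Finset.sum_congr _ (fun k _ => rfl)
    ext k
    simp only [Finset.mem_filter, Finset.mem_range, Finset.mem_Ico]
    constructor
    · rintro ⟨hk, hAk, hBk⟩
      exact ⟨(hBiff k).1 hBk, by have := (hAiff k (by omega)).1 hAk; omega⟩
    · rintro ⟨h1, h2⟩
      have hka : k ≤ a := by omega
      exact ⟨by omega, (hAiff k (le_trans hka han)).2 hka, (hBiff k).2 h1⟩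
  rw [hsum]
  rcases lt_or_ge a b with hab | hab
  · rw [Finset.Ico_eq_empty (by omega), Finset.sum_empty]
  -- nonempty case: prove the length is even
  -- key sign facts
  have hd_pow : ∀ i, i ≤ n → (-1 : ℝ) ^ (n - i) * u n = (-1 : ℝ) ^ i * ((-1 : ℝ) ^ n * u n) := by
    intro i hi
    have : (-1 : ℝ) ^ i * (-1 : ℝ) ^ n = (-1 : ℝ) ^ (n - i) := by
      rw [← pow_add]
      have : i + n = (n - i) + 2 * i := by omega
      rw [this, pow_add, pow_mul]
      simp
    rw [← mul_assoc, this]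
  set d := (-1 : ℝ) ^ n * u n with hd_def
  -- upper boundary fact
  have hU : (-1 : ℝ) ^ (a + 1) * d < 0 := by
    rcases eq_or_lt_of_le han with haeq | halt
    · -- a = n : u n > 0
      have hun_nonneg : 0 ≤ u n := haA n hn (by omega)
      have hun_ne : u n ≠ 0 := H1 n hn le_rfl (fun i hi hi' => haA i hi (by omega))
      have hun : 0 < u n := lt_of_le_of_ne hun_nonneg (Ne.symm hun_ne)
      have : (-1 : ℝ) ^ (a + 1) * d = -((-1 :ℝ)^n * (-1:ℝ)^n) * u n := by
        rw [hd_def, haeq]; ring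
      rw [this, ← pow_add]
      have : (-1 : ℝ) ^ (n + n) = 1 := by
        rw [← two_mul, pow_mul]; simp
      rw [this]; linarith
    · -- a < n : u (a+1) < 0
      have hnotA : ¬ A (a + 1) := by
        intro h; have := (hAiff (a+1) (by omega)).1 h; omega
      have hua1 : u (a + 1) < 0 := by
        simp only [hA_def] at hnotA
        push_neg at hnotA
        obtain ⟨i, hi1, hi2, hi3⟩ := hnotA
        have : i = a + 1 := by
          rcases Nat.lt_or_ge i (a+1) with h' | h'
          · exact absurd (haA i hi1 (by omega)) (by exact fun hcon => absurd hcon (not_le.2 hi3))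
          · omega
        rwa [this] at hi3
      rcases eq_or_lt_of_le (show a + 1 ≤ n by omega) with haeq1 | halt1
      · -- a + 1 = n
        have : d = (-1 : ℝ)^(a+1) * u (a+1) := by rw [hd_def, haeq1]
        rw [this, ← mul_assoc, ← pow_add]
        have : (-1 : ℝ) ^ (a + 1 + (a + 1)) = 1 := by
          rw [← two_mul, pow_mul]; simp
        rw [this, one_mul]; exact hua1
      · -- a + 1 ≤ n - 1 : use B b at i = a+1
        have hba1 : (-1 : ℝ) ^ (n - (a+1)) * u n ≤ u (a + 1) :=
          hBb (a+1) (by omega) (by omega)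
        rw [hd_pow (a+1) (by omega)] at hba1
        exact lt_of_le_of_lt hba1 hua1
  have hdne : d ≠ 0 := by
    intro h; rw [h, mul_zero] at hU; exact lt_irrefl 0 hU
  -- lower boundary fact
  have hL : (-1 : ℝ) ^ b * d < 0 := by
    rcases Nat.eq_zero_or_pos b with hb0 | hbpos
    · have h0 : (-1 : ℝ) ^ (n - 0) * u n ≤ u 0 := hBb 0 (by omega) (by omega)
      rw [hu0, hd_pow 0 (by omega)] at h0
      simp only [pow_zero, one_mul] at h0
      rw [hb0, pow_zero, one_mul]
      exact lt_of_le_of_ne h0 hdne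
    · obtain ⟨b', hb'⟩ : ∃ b', b = b' + 1 := ⟨b - 1, by omega⟩
      have hnotB : ¬ B b' := Nat.find_min _ (by omega)
      simp only [hB_def] at hnotB
      push_neg at hnotB
      obtain ⟨i, hi1, hi2, hi3⟩ := hnotB
      have hib : i = b' := by
        rcases Nat.lt_or_ge i (b'+1) with h' | h'
        · omega
        · exact absurd (hBb i (by omega) hi2) (not_le.2 hi3)
      subst hib
      have hub' : 0 ≤ u i := by
        rcases Nat.eq_zero_or_pos i with h0 | hpos
        · rw [h0, hu0]
        · exact haA i hpos (by omega)
      rw [hd_pow i (by omega)] at hi3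
      have hpos2 : 0 < (-1 : ℝ) ^ i * d := lt_of_le_of_lt hub' hi3
      have hstep : (-1 : ℝ) ^ b * d = -((-1 : ℝ) ^ i * d) := by rw [hb']; ring
      rw [hstep]; linarith
  -- combine: Even (a + 1 + b), hence Even (a + 1 - b)
  have hprod : 0 < ((-1 : ℝ) ^ (a + 1) * d) * ((-1 : ℝ) ^ b * d) := mul_pos_of_neg_of_neg hU hL
  have hre : ((-1 : ℝ) ^ (a + 1) * d) * ((-1 : ℝ) ^ b * d) = (-1 : ℝ) ^ (a + 1 + b) * (d * d) := by
    rw [pow_add]; ring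
  rw [hre] at hprod
  have heven : Even (a + 1 + b) := by
    by_contra hodd
    have : Odd (a + 1 + b) := Nat.not_even_iff_odd.1 hodd
    rw [this.neg_one_pow] at hprod
    nlinarith
  have heven' : Even (a + 1 - b) := by
    rcases Nat.even_add.1 heven with h
    exact (Nat.even_sub (by omega)).2 h
  rw [Finset.sum_Ico_eq_sum_range]
  have : ∀ i ∈ Finset.range (a + 1 - b), (-1 : ℝ) ^ (b + i) = (-1 : ℝ)^b * (-1 : ℝ)^i := by
    intro i _; rw [pow_add]
  rw [Finset.sum_congr rfl this, ← Finset.mul_sum, neg_one_geom_sum, if_pos heven', mul_zero]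


/-- Normal-form persistence set. -/
def nset (θ : ℝ) (m : ℕ) : Set (Fin m → ℝ) := {u | ∀ i < m, 0 ≤ pS θ (ext m u) (i + 1)}

lemma measurableSet_nset (θ : ℝ) (m : ℕ) : MeasurableSet (nset θ m) := by
  have h : nset θ m = ⋂ i ∈ Finset.range m, {u : Fin m → ℝ | 0 ≤ pS θ (ext m u) (i + 1)} := by
    ext u; simp [nset, Finset.mem_range]
  rw [h]
  exact Finset.measurableSet_biInter _ fun i _ =>
    measurableSet_le measurable_const (measurable_pS_ext m θ id (i + 1))

lemma Iic_sum_eq {m : ℕ} (u : Fin m → ℝ) (θ : ℝ) (k : Fin m) :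
    ∑ j ∈ Finset.Iic k, θ ^ (k.1 - j.1) * u j = pS θ (ext m u) (k.1 + 1) := by
  have h1 : ∀ j ∈ Finset.Iic k, θ ^ (k.1 - j.1) * u j
      = (fun j : ℕ => θ ^ (k.1 - j) * ext m u j) j.1 := by
    intro j _
    simp only [ext, j.isLt, dif_pos, Fin.eta]
  rw [Finset.sum_congr rfl h1, sum_Iic_eq_range k (fun j => θ ^ (k.1 - j) * ext m u j)]
  unfold pS
  refine Finset.sum_congr rfl fun j hj => ?_
  rw [show k.1 + 1 - 1 - j = k.1 - j from by omega]

lemma persist_eq (μ : Measure ℝ) (θ : ℝ) (m : ℕ) :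
    persist μ θ m = ((Measure.pi fun _ : Fin m => μ) (nset θ m)).toReal := by
  unfold persist
  congr 2
  ext u
  simp only [Set.mem_setOf_eq, nset]
  constructor
  · intro h i him
    have h2 := h ⟨i, him⟩
    rwa [Iic_sum_eq] at h2
  · intro h k
    rw [Iic_sum_eq]
    exact h k.1 k.isLt

/-- The bijection sending the first `k` indices in order and the rest in reverse order. -/
def esum (n k : ℕ) (hk : k ≤ n) : Fin k ⊕ Fin (n - k) ≃ Fin n where
  toFun := Sum.elim (fun i => ⟨i.1, lt_of_lt_of_le i.2 hk⟩)
    (fun i => ⟨n - 1 - i.1, by have := i.2; omega⟩)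
  invFun := fun i => if h : i.1 < k then Sum.inl ⟨i.1, h⟩
    else Sum.inr ⟨n - 1 - i.1, by have := i.2; omega⟩
  left_inv := by
    rintro (i | i) <;> dsimp only [Sum.elim_inl, Sum.elim_inr]
    · rw [dif_pos i.2]
    · have := i.2
      rw [dif_neg (by omega : ¬ (n - 1 - i.1 < k))]
      exact congrArg Sum.inr (Fin.ext (by simp only [Fin.val_mk]; omega))
  right_inv := by
    intro i
    have := i.2
    dsimp only
    by_cases h : i.1 < k
    · rw [dif_pos h]; rfl
    · rw [dif_neg h]
      exact Fin.ext (by simp only [Sum.elim_inr, Fin.val_mk]; omega)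

/-- The measure-preserving splitting map. -/
noncomputable def splitMap (n k : ℕ) (hk : k ≤ n) :
    (Fin n → ℝ) ≃ᵐ (Fin k → ℝ) × (Fin (n - k) → ℝ) :=
  (MeasurableEquiv.piCongrLeft (fun _ : Fin n => ℝ) (esum n k hk)).symm.trans
    (MeasurableEquiv.sumPiEquivProdPi fun _ => ℝ)

lemma splitMap_preserving (μ : Measure ℝ) [IsProbabilityMeasure μ] (n k : ℕ) (hk : k ≤ n) :
    MeasurePreserving (splitMap n k hk) (Measure.pi fun _ : Fin n => μ)
      ((Measure.pi fun _ : Fin k => μ).prod (Measure.pi fun _ : Fin (n - k) => μ)) := by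
  have h1 := measurePreserving_piCongrLeft (fun _ : Fin n => μ) (esum n k hk)
  have h2 := MeasurePreserving.symm _ h1
  have h3 := measurePreserving_sumPiEquivProdPi
    (fun _ : Fin k ⊕ Fin (n - k) => μ)
  exact h3.comp h2

lemma splitMap_apply_fst (n k : ℕ) (hk : k ≤ n) (x : Fin n → ℝ) (i : Fin k) :
    (splitMap n k hk x).1 i = x ⟨i.1, lt_of_lt_of_le i.2 hk⟩ := rfl

lemma splitMap_apply_snd (n k : ℕ) (hk : k ≤ n) (x : Fin n → ℝ) (i : Fin (n - k)) :
    (splitMap n k hk x).2 i = x ⟨n - 1 - i.1, by have := i.2; omega⟩ := rfl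

lemma pS_zero (θ : ℝ) (x : ℕ → ℝ) : pS θ x 0 = 0 := by simp [pS]

/-- The joint event: prefix persistence for `θ` and reversed-tail persistence for `θ⁻¹`. -/
def Ev (θ : ℝ) (n : ℕ) (k : ℕ) : Set (Fin n → ℝ) :=
  {x | (∀ i < k, 0 ≤ pS θ (ext n x) (i + 1)) ∧
       (∀ i < n - k, 0 ≤ pS θ⁻¹ (fun j => ext n x (n - 1 - j)) (i + 1))}

lemma measurableSet_Ev (θ : ℝ) (n k : ℕ) : MeasurableSet (Ev θ n k) := by
  have h : Ev θ n k = (⋂ i ∈ Finset.range k, {x : Fin n → ℝ | 0 ≤ pS θ (ext n x) (i + 1)}) ∩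
      (⋂ i ∈ Finset.range (n - k),
        {x : Fin n → ℝ | 0 ≤ pS θ⁻¹ (fun j => ext n x (n - 1 - j)) (i + 1)}) := by
    ext x; simp [Ev, Finset.mem_range]
  rw [h]
  refine MeasurableSet.inter ?_ ?_
  · exact Finset.measurableSet_biInter _ fun i _ =>
      measurableSet_le measurable_const (measurable_pS_ext n θ id (i + 1))
  · exact Finset.measurableSet_biInter _ fun i _ =>
      measurableSet_le measurable_const (measurable_pS_ext n θ⁻¹ (fun j => n - 1 - j) (i + 1))

lemma prod_eq_inter (μ : Measure ℝ) [IsProbabilityMeasure μ] (θ : ℝ) (n k : ℕ) (hk : k ≤ n) :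
    persist μ θ k * persist μ θ⁻¹ (n - k)
      = ((Measure.pi fun _ : Fin n => μ) (Ev θ n k)).toReal := by
  rw [persist_eq, persist_eq]
  have hsplit := splitMap_preserving μ n k hk
  have hset : (splitMap n k hk) ⁻¹' ((nset θ k) ×ˢ (nset θ⁻¹ (n - k))) = Ev θ n k := by
    ext x
    simp only [Set.mem_preimage, Set.mem_prod, nset, Ev, Set.mem_setOf_eq]
    have hfst : ∀ i < k, pS θ (ext k (splitMap n k hk x).1) (i + 1)
        = pS θ (ext n x) (i + 1) := by
      intro i hi
      apply pS_congr
      intro j hj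
      have hjk : j < k := by omega
      have hjn : j < n := by omega
      simp only [ext, dif_pos hjk, dif_pos hjn]
      rw [splitMap_apply_fst]
    have hsnd : ∀ i < n - k, pS θ⁻¹ (ext (n - k) (splitMap n k hk x).2) (i + 1)
        = pS θ⁻¹ (fun j => ext n x (n - 1 - j)) (i + 1) := by
      intro i hi
      apply pS_congr
      intro j hj
      have hj1 : j < n - k := by omega
      have hj2 : n - 1 - j < n := by omega
      simp only [ext, dif_pos hj1, dif_pos hj2]
      rw [splitMap_apply_snd]
    constructor
    · rintro ⟨h1, h2⟩
      exact ⟨fun i hi => by rw [← hfst i hi]; exact h1 i hi,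
             fun i hi => by rw [← hsnd i hi]; exact h2 i hi⟩
    · rintro ⟨h1, h2⟩
      exact ⟨fun i hi => by rw [hfst i hi]; exact h1 i hi,
             fun i hi => by rw [hsnd i hi]; exact h2 i hi⟩
  rw [← hset, hsplit.measure_preimage_equiv, Measure.prod_prod, ENNReal.toReal_mul]

lemma null_slice {N : ℕ} (μ : Measure ℝ) [IsProbabilityMeasure μ]
    (hatom : ∀ x : ℝ, 0 ≤ x → μ {x} = 0) (i0 : Fin (N + 1))
    (C : Set (Fin (N + 1) → ℝ)) (hC : MeasurableSet C)
    (f : (Fin (N + 1) → ℝ) → ℝ) (hf : Measurable f)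
    (hind : ∀ x y : Fin (N + 1) → ℝ, (∀ j, j ≠ i0 → x j = y j) → (x ∈ C ↔ y ∈ C) ∧ f x = f y)
    (hpos : ∀ x ∈ C, 0 ≤ f x) :
    (Measure.pi fun _ : Fin (N + 1) => μ) {x | x ∈ C ∧ x i0 = f x} = 0 := by
  set e := MeasurableEquiv.piFinSuccAbove (fun _ : Fin (N + 1) => ℝ) i0 with he_def
  have he := measurePreserving_piFinSuccAbove (fun _ : Fin (N + 1) => μ) i0
  set g : (Fin N → ℝ) → (Fin (N + 1) → ℝ) := fun z => e.symm (0, z) with hg_def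
  have hgmeas : Measurable g := e.symm.measurable.comp (measurable_const.prodMk measurable_id)
  have hgj : ∀ (x : Fin (N + 1) → ℝ) (j : Fin (N + 1)), j ≠ i0 →
      g (fun j' => x (i0.succAbove j')) j = x j := by
    intro x j hj
    obtain ⟨j', rfl⟩ := Fin.exists_succAbove_eq hj
    show (Fin.insertNthEquiv (fun _ => ℝ) i0) (0, fun j' => x (i0.succAbove j')) _ = _
    simp [Fin.insertNthEquiv]
  set S : Set (ℝ × (Fin N → ℝ)) := {p | g p.2 ∈ C ∧ p.1 = f (g p.2)} with hS_def
  have hSmeas : MeasurableSet S := by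
    have h1 : MeasurableSet {p : ℝ × (Fin N → ℝ) | g p.2 ∈ C} :=
      (hgmeas.comp measurable_snd) hC
    have h2 : MeasurableSet {p : ℝ × (Fin N → ℝ) | p.1 = f (g p.2)} :=
      measurableSet_eq_fun measurable_fst (hf.comp (hgmeas.comp measurable_snd))
    exact h1.inter h2
  have hE : ∀ x : Fin (N + 1) → ℝ, e x = (x i0, fun j => x (i0.succAbove j)) := fun x => rfl
  have hset : {x | x ∈ C ∧ x i0 = f x} = e ⁻¹' S := by
    ext x
    have hkey := hind (g (fun j' => x (i0.succAbove j'))) x (hgj x)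
    simp only [Set.mem_preimage, hS_def, Set.mem_setOf_eq, hE]
    rw [hkey.1, hkey.2]
  rw [hset, he.measure_preimage_equiv]
  rw [Measure.prod_apply_symm hSmeas]
  have hzero : ∀ z : Fin N → ℝ, μ ((fun a => (a, z)) ⁻¹' S) = 0 := by
    intro z
    by_cases hz : g z ∈ C
    · have : (fun a : ℝ => (a, z)) ⁻¹' S = {f (g z)} := by
        ext a; simp [hS_def, hz]
      rw [this]
      exact hatom _ (hpos _ hz)
    · have : (fun a : ℝ => (a, z)) ⁻¹' S = ∅ := by
        ext a; simp [hS_def, hz]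
      rw [this, measure_empty]
  simp only [hzero, lintegral_zero]

lemma bad_null {N : ℕ} (μ : Measure ℝ) [IsProbabilityMeasure μ]
    (hatom : ∀ x : ℝ, 0 ≤ x → μ {x} = 0) {θ : ℝ} (hθ : θ < 0) (I : ℕ) (hI1 : 1 ≤ I)
    (hIn : I ≤ N + 1) :
    (Measure.pi fun _ : Fin (N + 1) => μ)
      {x | (∀ i, 1 ≤ i → i < I → 0 ≤ pS θ (ext (N + 1) x) i) ∧ pS θ (ext (N + 1) x) I = 0}
      = 0 := by
  set i0 : Fin (N + 1) := ⟨I - 1, by omega⟩ with hi0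
  set C : Set (Fin (N + 1) → ℝ) :=
    {x | ∀ i, 1 ≤ i → i < I → 0 ≤ pS θ (ext (N + 1) x) i} with hC_def
  set f : (Fin (N + 1) → ℝ) → ℝ := fun x => -θ * pS θ (ext (N + 1) x) (I - 1) with hf_def
  have hC : MeasurableSet C := by
    have h : C = ⋂ i ∈ Finset.Ico 1 I, {x : Fin (N + 1) → ℝ | 0 ≤ pS θ (ext (N + 1) x) i} := by
      ext x; simp [hC_def, Finset.mem_Ico]
    rw [h]
    exact Finset.measurableSet_biInter _ fun i _ =>
      measurableSet_le measurable_const (measurable_pS_ext _ θ id i)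
  have hf : Measurable f := (measurable_pS_ext _ θ id (I - 1)).const_mul _
  have hsub : {x | (∀ i, 1 ≤ i → i < I → 0 ≤ pS θ (ext (N + 1) x) i)
        ∧ pS θ (ext (N + 1) x) I = 0}
      ⊆ {x | x ∈ C ∧ x i0 = f x} := by
    rintro x ⟨h1, h2⟩
    refine ⟨h1, ?_⟩
    have h3 := pS_succ θ (ext (N + 1) x) (I - 1)
    rw [show I - 1 + 1 = I from by omega] at h3
    rw [h3] at h2
    have hext : ext (N + 1) x (I - 1) = x i0 := by
      simp only [ext, dif_pos (show I - 1 < N + 1 by omega)]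
      rfl
    show x i0 = -θ * pS θ (ext (N + 1) x) (I - 1)
    rw [← hext]
    linarith
  refine measure_mono_null hsub (null_slice μ hatom i0 C hC f hf ?_ ?_)
  · intro x y hxy
    have hps : ∀ i, i ≤ I - 1 → pS θ (ext (N + 1) x) i = pS θ (ext (N + 1) y) i := by
      intro i hi
      apply pS_congr
      intro j hj
      have hj0 : j < N + 1 := by omega
      simp only [ext, dif_pos hj0]
      apply hxy
      intro hcon
      have : j = I - 1 := by
        have := congrArg Fin.val hcon
        simpa using this
      omega
    constructor
    · constructor
      · intro h i h1 h2; rw [← hps i (by omega)]; exact h i h1 h2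
      · intro h i h1 h2; rw [hps i (by omega)]; exact h i h1 h2
    · show -θ * pS θ (ext (N + 1) x) (I - 1) = -θ * pS θ (ext (N + 1) y) (I - 1)
      rw [hps (I - 1) le_rfl]
  · intro x hx
    have hps0 : 0 ≤ pS θ (ext (N + 1) x) (I - 1) := by
      rcases Nat.lt_or_ge 1 I with h | h
      · exact hx (I - 1) (by omega) (by omega)
      · rw [show I - 1 = 0 from by omega, pS_zero]
    have : (0:ℝ) < -θ := by linarith
    exact mul_nonneg this.le hps0

end PersistDual

open PersistDual

theorem persistence_duality_neg_drift (μ : Measure ℝ) [IsProbabilityMeasure μ]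
    (hatom : ∀ x : ℝ, 0 ≤ x → μ {x} = 0) (θ : ℝ) (hθ : θ < 0) (n : ℕ) (hn : 1 ≤ n) :
    ∑ k ∈ Finset.range (n + 1), (-1 : ℝ) ^ k * persist μ θ k * persist μ θ⁻¹ (n - k) = 0 := by
  classical
  obtain ⟨N, rfl⟩ : ∃ N, n = N + 1 := ⟨n - 1, by omega⟩
  set π : Measure (Fin (N + 1) → ℝ) := Measure.pi fun _ => μ with hπ
  have hterm : ∀ k ∈ Finset.range (N + 1 + 1),
      (-1 : ℝ) ^ k * persist μ θ k * persist μ θ⁻¹ (N + 1 - k)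
      = ∫ x, (-1 : ℝ) ^ k * (Ev θ (N + 1) k).indicator (fun _ => (1:ℝ)) x ∂π := by
    intro k hk
    have hk' : k ≤ N + 1 := by have := Finset.mem_range.1 hk; omega
    rw [mul_assoc, prod_eq_inter μ θ (N + 1) k hk', ← measureReal_def,
      ← integral_indicator_one (measurableSet_Ev θ (N + 1) k), ← integral_const_mul]
    rfl
  rw [Finset.sum_congr rfl hterm]
  have hint : ∀ k ∈ Finset.range (N + 1 + 1),
      Integrable (fun x => (-1 : ℝ) ^ k * (Ev θ (N + 1) k).indicator (fun _ => (1:ℝ)) x) π := by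
    intro k _
    refine Integrable.const_mul ?_ _
    rw [integrable_indicator_iff (measurableSet_Ev θ (N + 1) k)]
    exact integrableOn_const (measure_lt_top π _).ne
  rw [← integral_finset_sum _ hint]
  have hbad : π (⋃ I ∈ Set.Icc 1 (N + 1),
      {x | (∀ i, 1 ≤ i → i < I → 0 ≤ pS θ (ext (N + 1) x) i)
           ∧ pS θ (ext (N + 1) x) I = 0}) = 0 := by
    rw [measure_biUnion_null_iff (Set.to_countable _)]
    intro I hI
    exact bad_null μ hatom hθ I hI.1 hI.2
  apply integral_eq_zero_of_ae
  filter_upwards [measure_eq_zero_iff_ae_notMem.1 hbad] with x hx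
  have hx' : ∀ I, 1 ≤ I → I ≤ N + 1 →
      ¬((∀ i, 1 ≤ i → i < I → 0 ≤ pS θ (ext (N + 1) x) i) ∧ pS θ (ext (N + 1) x) I = 0) := by
    intro I h1 h2 hcon
    exact hx (Set.mem_biUnion (Set.mem_Icc.2 ⟨h1, h2⟩) hcon)
  have hu0 : uu θ (ext (N + 1) x) 0 = 0 := by simp [uu, W]
  have hH1 : ∀ I, 1 ≤ I → I ≤ N + 1 →
      (∀ i, 1 ≤ i → i < I → 0 ≤ uu θ (ext (N + 1) x) i) → uu θ (ext (N + 1) x) I ≠ 0 := by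
    intro I h1 h2 h3 hcon
    refine hx' I h1 h2 ⟨fun i hi1 hi2 => ?_, ?_⟩
    · rw [pS_nonneg_iff hθ]; exact h3 i hi1 hi2
    · rw [pS_eq_zero_iff hθ]; exact hcon
  have hg1 : ∀ k, ((∀ i, 1 ≤ i → i ≤ k → 0 ≤ uu θ (ext (N + 1) x) i) ∧
      (∀ i, k ≤ i → i ≤ N + 1 - 1 →
        (-1 : ℝ) ^ (N + 1 - i) * uu θ (ext (N + 1) x) (N + 1) ≤ uu θ (ext (N + 1) x) i)) →
      (Ev θ (N + 1) k).indicator (fun _ => (1:ℝ)) x = 1 := by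
    rintro k ⟨hA, hB⟩
    have hmem : x ∈ Ev θ (N + 1) k := by
      simp only [Ev, Set.mem_setOf_eq]
      refine ⟨fun i hi => ?_, fun i hi => ?_⟩
      · rw [pS_nonneg_iff hθ]; exact hA (i + 1) (by omega) (by omega)
      · rw [tail_nonneg_iff hθ (ext (N + 1) x) (by omega : 1 ≤ i + 1)
          (by omega : i + 1 ≤ N + 1)]
        have h4 := hB (N + 1 - (i + 1)) (by omega) (by omega)
        rwa [show N + 1 - (N + 1 - (i + 1)) = i + 1 from by omega] at h4
    rw [Set.indicator_of_mem hmem]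
  have hg0 : ∀ k, ¬((∀ i, 1 ≤ i → i ≤ k → 0 ≤ uu θ (ext (N + 1) x) i) ∧
      (∀ i, k ≤ i → i ≤ N + 1 - 1 →
        (-1 : ℝ) ^ (N + 1 - i) * uu θ (ext (N + 1) x) (N + 1) ≤ uu θ (ext (N + 1) x) i)) →
      (Ev θ (N + 1) k).indicator (fun _ => (1:ℝ)) x = 0 := by
    intro k hk
    have hxE : x ∉ Ev θ (N + 1) k := by
      rintro ⟨h1, h2⟩
      refine hk ⟨fun i hi1 hik => ?_, fun i hik hiN => ?_⟩
      · have h3 := h1 (i - 1) (by omega)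
        rw [show i - 1 + 1 = i from by omega] at h3
        rwa [pS_nonneg_iff hθ] at h3
      · have h3 := h2 (N + 1 - i - 1) (by omega)
        rw [show N + 1 - i - 1 + 1 = N + 1 - i from by omega] at h3
        rw [tail_nonneg_iff hθ (ext (N + 1) x) (by omega) (by omega)] at h3
        rwa [show N + 1 - (N + 1 - i) = i from by omega,
          show N + 1 - i = N + 1 - i from rfl] at h3
    exact Set.indicator_of_notMem hxE _
  exact parity_core (N + 1) (by omega) (uu θ (ext (N + 1) x)) hu0 hH1
    (fun k => (Ev θ (N + 1) k).indicator (fun _ => (1:ℝ)) x) hg1 hg0
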